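/- Clausen-type identity: ₂F₁(1/12, 5/12; 1; z)² = ₃F₂(1/6, 1/2, 5/6; 1, 1; z) as formal power series in z. -/

import Mathlib

noncomputable section

/-- `₂F₁(1/12, 5/12; 1; z)` as a formal power series in `z`. -/
def F21 : PowerSeries ℚ :=
  PowerSeries.mk fun n =>
    (ascPochhammer ℚ n).eval (1 / 12) * (ascPochhammer ℚ n).eval (5 / 12) /
      ((ascPochhammer ℚ n).eval 1 * n.factorial)

/-- `₃F₂(1/6, 1/2, 5/6; 1, 1; z)` as a formal power series in `z`. -/
def F32 : PowerSeries ℚ :=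
  PowerSeries.mk fun n =>
    (ascPochhammer ℚ n).eval (1 / 6) * (ascPochhammer ℚ n).eval (1 / 2) *
        (ascPochhammer ℚ n).eval (5 / 6) /
      ((ascPochhammer ℚ n).eval 1 * (ascPochhammer ℚ n).eval 1 * n.factorial)

end

namespace ClausenAux

noncomputable def aQ (n : ℕ) : ℚ :=
  (ascPochhammer ℚ n).eval (1 / 12) * (ascPochhammer ℚ n).eval (5 / 12) /
      ((ascPochhammer ℚ n).eval 1 * n.factorial)

lemma eval_succ (x : ℚ) (n : ℕ) :
    (ascPochhammer ℚ (n + 1)).eval x = (ascPochhammer ℚ n).eval x * (x + n) := by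
  simp [ascPochhammer_succ_right]

lemma aQ_succ (n : ℕ) :
    aQ (n + 1) = aQ n * (((n : ℚ) + 1/12) * ((n : ℚ) + 5/12) / ((n : ℚ) + 1) ^ 2) := by
  have hne : ((n : ℚ) + 1) ≠ 0 := by positivity
  have hfac : ((n.factorial : ℚ)) ≠ 0 := by exact_mod_cast n.factorial_ne_zero
  simp only [aQ, eval_succ, ascPochhammer_eval_one, Nat.factorial_succ, Nat.cast_mul,
    Nat.cast_add, Nat.cast_one]
  field_simp
  ring

lemma aQ_zero : aQ 0 = 1 := by simp [aQ]

/-- coefficient of F32 -/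
noncomputable def bQ (n : ℕ) : ℚ :=
  (ascPochhammer ℚ n).eval (1 / 6) * (ascPochhammer ℚ n).eval (1 / 2) *
        (ascPochhammer ℚ n).eval (5 / 6) /
      ((ascPochhammer ℚ n).eval 1 * (ascPochhammer ℚ n).eval 1 * n.factorial)

lemma bQ_zero : bQ 0 = 1 := by simp [bQ]

lemma bQ_rec (n : ℕ) :
    ((n : ℚ) + 1) ^ 3 * bQ (n + 1)
      = ((n : ℚ) + 1/6) * ((n : ℚ) + 1/2) * ((n : ℚ) + 5/6) * bQ n := by
  have hfac : ((n.factorial : ℚ)) ≠ 0 := by exact_mod_cast n.factorial_ne_zero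
  have hne : ((n : ℚ) + 1) ≠ 0 := by positivity
  simp only [bQ, eval_succ, ascPochhammer_eval_one, Nat.factorial_succ, Nat.cast_mul,
    Nat.cast_add, Nat.cast_one]
  field_simp
  ring

noncomputable def L (n : ℕ) : ℚ := ∑ k ∈ Finset.range (n + 1), aQ k * aQ (n - k)

/-- pointwise certificate identity, in split variables -/
lemma pointwise (k m : ℕ) :
    ((k : ℚ) + (m : ℚ) + 1) ^ 3 * (aQ k * aQ (m + 1))
      = ((k : ℚ) + (m : ℚ) + 1/6) * ((k : ℚ) + (m : ℚ) + 1/2) * ((k : ℚ) + (m : ℚ) + 5/6)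
          * (aQ k * aQ m)
        + aQ (k + 1) * aQ m
            * (((k : ℚ) + 1) ^ 2 * (2 * ((k : ℚ) + 1) - 3 * ((k : ℚ) + (m : ℚ) + 1)))
        - aQ k * aQ (m + 1)
            * ((k : ℚ) ^ 2 * (2 * (k : ℚ) - 3 * ((k : ℚ) + (m : ℚ) + 1))) := by
  have hk : ((k : ℚ) + 1) ≠ 0 := by positivity
  have hm : ((m : ℚ) + 1) ≠ 0 := by positivity
  rw [aQ_succ k, aQ_succ m]
  field_simp
  ring

lemma L_rec (n : ℕ) :
    ((n : ℚ) + 1) ^ 3 * L (n + 1)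
      = ((n : ℚ) + 1/6) * ((n : ℚ) + 1/2) * ((n : ℚ) + 5/6) * L n := by
  -- g k = aQ k * aQ (n+1-k) * k^2 (2k - 3(n+1))
  set g : ℕ → ℚ := fun k =>
    aQ k * aQ (n + 1 - k) * ((k : ℚ) ^ 2 * (2 * (k : ℚ) - 3 * ((n : ℚ) + 1))) with hg
  have step : ∀ k ∈ Finset.range (n + 1),
      ((n : ℚ) + 1) ^ 3 * (aQ k * aQ (n + 1 - k))
        = ((n : ℚ) + 1/6) * ((n : ℚ) + 1/2) * ((n : ℚ) + 5/6) * (aQ k * aQ (n - k))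
          + (g (k + 1) - g k) := by
    intro k hk
    have hk' : k ≤ n := Finset.mem_range_succ_iff.mp hk
    obtain ⟨m, rfl⟩ : ∃ m, n = k + m := ⟨n - k, by omega⟩
    have h1 : k + m + 1 - (k + 1) = m := by omega
    have h2 : k + m + 1 - k = m + 1 := by omega
    have h3 : k + m - k = m := by omega
    rw [hg]
    simp only [h1, h2, h3]
    have := pointwise k m
    push_cast
    push_cast at this
    linarith [this]
  have sum1 : ∑ k ∈ Finset.range (n + 1), ((n : ℚ) + 1) ^ 3 * (aQ k * aQ (n + 1 - k))
      = ((n : ℚ) + 1/6) * ((n : ℚ) + 1/2) * ((n : ℚ) + 5/6) * L n + (g (n + 1) - g 0) := by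
    rw [Finset.sum_congr rfl step, Finset.sum_add_distrib, Finset.sum_range_sub g]
    simp [L, Finset.mul_sum]
  have hg0 : g 0 = 0 := by simp [hg]
  have hgn : g (n + 1) = -(((n : ℚ) + 1) ^ 3 * (aQ (n + 1) * aQ 0)) := by
    rw [hg]
    simp only [Nat.add_sub_cancel_left, Nat.sub_self]
    push_cast
    ring
  have expand : L (n + 1)
      = (∑ k ∈ Finset.range (n + 1), aQ k * aQ (n + 1 - k)) + aQ (n + 1) * aQ 0 := by
    rw [L, Finset.sum_range_succ, Nat.sub_self]
  rw [expand, mul_add, Finset.mul_sum]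
  rw [sum1, hg0, hgn]
  ring

lemma key (n : ℕ) : L n = bQ n := by
  induction n with
  | zero => simp [L, aQ_zero, bQ_zero]
  | succ n ih =>
    have hne : (((n : ℚ) + 1) ^ 3) ≠ 0 := by positivity
    have h := L_rec n
    rw [ih, ← bQ_rec n] at h
    exact mul_left_cancel₀ hne h

end ClausenAux

/-- Clausen-type identity `₂F₁(1/12,5/12;1;z)² = ₃F₂(1/6,1/2,5/6;1,1;z)`. -/
theorem clausen_identity : F21 ^ 2 = F32 := by
  ext n
  rw [pow_two, PowerSeries.coeff_mul]
  have : ∀ k, (PowerSeries.coeff k) F21 = ClausenAux.aQ k := fun k => by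
    simp [F21, ClausenAux.aQ]
  have h2 : (PowerSeries.coeff n) F32 = ClausenAux.bQ n := by
    simp [F32, ClausenAux.bQ]
  rw [h2, ← ClausenAux.key, ClausenAux.L,
    Finset.Nat.sum_antidiagonal_eq_sum_range_succ_mk]
  simp [this]
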